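/- The order dimension of a finite poset is at most its width (the maximum size of an antichain). -/

import Mathlib

section Defs
variable (α : Type*) [PartialOrder α]

/-- `L` is a linear extension of the partial order on `α`. -/
def IsLinExt (L : LinearOrder α) : Prop := ∀ x y : α, x ≤ y → L.le x y

/-- The poset `α` is the intersection of `d` linear extensions. -/
def HasRealizer (d : ℕ) : Prop :=
  ∃ Ls : Fin d → LinearOrder α, (∀ i, IsLinExt α (Ls i)) ∧
    ∀ x y : α, (∀ i, (Ls i).le x y) → x ≤ y

/-- The order dimension of the poset `α`. -/
noncomputable def pdim : ℕ := sInf {d | HasRealizer α d}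

/-- `x` and `y` are incomparable. -/
def IncompP (x y : α) : Prop := ¬ x ≤ y ∧ ¬ y ≤ x

/-- A set of (incomparable) pairs is reversible if some linear extension reverses all pairs. -/
def ReversibleSet (I : Set (α × α)) : Prop :=
  ∃ L : LinearOrder α, IsLinExt α L ∧ ∀ p ∈ I, L.lt p.2 p.1

/-- `I` can be partitioned into `d` reversible sets. -/
def RevPart (I : Set (α × α)) (d : ℕ) : Prop :=
  ∃ J : Fin d → Set (α × α), (⋃ i, J i) = I ∧
    (∀ i j, i ≠ j → Disjoint (J i) (J j)) ∧ ∀ i, ReversibleSet α (J i)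

/-- The least number of reversible sets partitioning `I` (with `revDim ∅ = 1`). -/
noncomputable def revDim (I : Set (α × α)) : ℕ := sInf {d | 0 < d ∧ RevPart α I d}

/-- Incomparable pairs `(a,b)` with `a ∈ A` and `b ∈ B`. -/
def IncPairs (A B : Set α) : Set (α × α) := {p | p.1 ∈ A ∧ p.2 ∈ B ∧ IncompP α p.1 p.2}

noncomputable def dimAB (A B : Set α) : ℕ := revDim α (IncPairs α A B)

/-- The minimal elements of `α`. -/
def minimalSet : Set α := {x | ∀ y : α, y ≤ x → y = x}

/-- The maximal elements of `α`. -/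
def maximalSet : Set α := {x | ∀ y : α, x ≤ y → y = x}

end Defs
section Aux
variable {α : Type*} [PartialOrder α]

lemma dilworth [DecidableEq α] :
    ∀ n (s : Finset α), s.card ≤ n →
    ∀ w : ℕ, (∀ A : Finset α, A ⊆ s → IsAntichain (· ≤ ·) (A : Set α) → A.card ≤ w) →
    ∃ 𝒞 : Finset (Finset α), (∀ c ∈ 𝒞, c ⊆ s ∧ IsChain (· ≤ ·) (c : Set α)) ∧
      (∀ x ∈ s, ∃ c ∈ 𝒞, x ∈ c) ∧
      (∀ c ∈ 𝒞, ∀ d ∈ 𝒞, c ≠ d → Disjoint c d) ∧ 𝒞.card ≤ w := by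
  classical
  intro n
  induction n with
  | zero =>
    intro s hs w _
    have : s = ∅ := Finset.card_eq_zero.mp (Nat.le_zero.mp hs)
    subst this
    exact ⟨∅, by simp, by simp, by simp, by simp⟩
  | succ n ih =>
    intro s hs w hw
    rcases s.eq_empty_or_nonempty with rfl | hne
    · exact ⟨∅, by simp, by simp, by simp, by simp⟩
    -- pick a maximal element a of s
    obtain ⟨a, ha, hamax⟩ := s.exists_maximal hne
    set s' := s.erase a with hs'
    have hs'card : s'.card ≤ n := by
      rw [hs', Finset.card_erase_of_mem ha]
      have h2 := Finset.card_pos.mpr hne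
      omega
    have hs'sub : s' ⊆ s := Finset.erase_subset a s
    -- width of s'
    set W : Set ℕ := {m | ∃ A : Finset α, A ⊆ s' ∧ IsAntichain (· ≤ ·) (A : Set α) ∧ A.card = m}
      with hW
    have hWne : W.Nonempty := ⟨0, ∅, by simp, by simp [IsAntichain], rfl⟩
    have hWbdd : BddAbove W := by
      refine ⟨s'.card, fun m hm => ?_⟩
      obtain ⟨A, hAs, _, hAc⟩ := hm
      exact hAc ▸ Finset.card_le_card hAs
    set k := sSup W with hk
    have hkmem : k ∈ W := Nat.sSup_mem hWne hWbdd
    obtain ⟨A₀, hA₀s, hA₀a, hA₀c⟩ := hkmem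
    have hkub : ∀ A : Finset α, A ⊆ s' → IsAntichain (· ≤ ·) (A : Set α) → A.card ≤ k :=
      fun A h1 h2 => le_csSup hWbdd ⟨A, h1, h2, rfl⟩
    -- apply IH to s'
    obtain ⟨𝒞', h𝒞'c, h𝒞'cov, h𝒞'dis, h𝒞'card⟩ := ih s' hs'card k hkub
    -- every k-antichain of s' meets every chain
    have meet : ∀ A : Finset α, A ⊆ s' → IsAntichain (· ≤ ·) (A : Set α) → A.card = k →
        ∀ c ∈ 𝒞', ∃ b ∈ A, b ∈ c := by
      intro A hAs hAa hAc c hc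
      have hf : ∀ x ∈ A, ∃ c ∈ 𝒞', x ∈ c := fun x hx => h𝒞'cov x (hAs hx)
      set f : ∀ x ∈ A, Finset α := fun x hx => Classical.choose (hf x hx) with hfdef
      have hfmem : ∀ x hx, f x hx ∈ 𝒞' := fun x hx => (Classical.choose_spec (hf x hx)).1
      have hfin : ∀ x hx, x ∈ f x hx := fun x hx => (Classical.choose_spec (hf x hx)).2
      have hinj : ∀ x y (hx : x ∈ A) (hy : y ∈ A), f x hx = f y hy → x = y := by
        intro x y hx hy hxy
        by_contra hxyne
        have hch := (h𝒞'c _ (hfmem x hx)).2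
        have hcomp := hch.total (x := x) (y := y) (hfin x hx) (hxy ▸ hfin y hy)
        rcases hcomp with h | h
        · exact hAa hx hy hxyne h
        · exact hAa hy hx (Ne.symm hxyne) h
      have hcard : 𝒞'.card ≤ A.card := by rw [hAc]; exact h𝒞'card
      obtain ⟨b, hb, hbc⟩ := Finset.surj_on_of_inj_on_of_card_le f hfmem hinj hcard c hc
      exact ⟨b, hb, hbc ▸ hfin b hb⟩
    -- the "top antichain element" of each chain
    set InA : α → Prop := fun x => ∃ A : Finset α, A ⊆ s' ∧ IsAntichain (· ≤ ·) (A : Set α) ∧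
        A.card = k ∧ x ∈ A with hInA
    have hTmax : ∀ c ∈ 𝒞', ∃ t ∈ c, InA t ∧ ∀ x ∈ c, InA x → x ≤ t := by
      intro c hc
      set T := c.filter (fun x => InA x) with hT
      have hTne : T.Nonempty := by
        obtain ⟨b, hbA, hbc⟩ := meet A₀ hA₀s hA₀a hA₀c c hc
        exact ⟨b, Finset.mem_filter.mpr ⟨hbc, A₀, hA₀s, hA₀a, hA₀c, hbA⟩⟩
      obtain ⟨t, htT, htmax⟩ := T.exists_maximal hTne
      have htc := (Finset.mem_filter.mp htT).1
      refine ⟨t, htc, (Finset.mem_filter.mp htT).2, ?_⟩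
      intro x hx hxA
      have hxT : x ∈ T := Finset.mem_filter.mpr ⟨hx, hxA⟩
      by_cases hxt : x = t
      · exact hxt ▸ le_rfl
      rcases (h𝒞'c c hc).2.total (x := x) (y := t) hx htc with h | h
      · exact h
      · exact absurd (le_antisymm (htmax hxT h) h) hxt
    set tf : ∀ c ∈ 𝒞', α := fun c hc => Classical.choose (hTmax c hc) with htf
    have htf1 : ∀ c hc, tf c hc ∈ c := fun c hc => (Classical.choose_spec (hTmax c hc)).1
    have htf2 : ∀ c hc, InA (tf c hc) := fun c hc => (Classical.choose_spec (hTmax c hc)).2.1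
    have htf3 : ∀ c hc, ∀ x ∈ c, InA x → x ≤ tf c hc :=
      fun c hc => (Classical.choose_spec (hTmax c hc)).2.2
    have htfs' : ∀ c hc, tf c hc ∈ s' := fun c hc => (h𝒞'c c hc).1 (htf1 c hc)
    -- the t's form an antichain (key claim)
    have hanti : ∀ c hc d hd, c ≠ d → ¬ tf c hc ≤ tf d hd := by
      intro c hc d hd hcd hle
      obtain ⟨A, hAs, hAa, hAc, htA⟩ := htf2 d hd
      obtain ⟨b, hbA, hbc⟩ := meet A hAs hAa hAc c hc
      have hb_le : b ≤ tf c hc := htf3 c hc b hbc ⟨A, hAs, hAa, hAc, hbA⟩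
      have hble : b ≤ tf d hd := hb_le.trans hle
      have hbeq : b = tf d hd := by
        by_contra hne'
        exact hAa hbA htA hne' hble
      have : b ∈ d := hbeq ▸ htf1 d hd
      exact (Finset.disjoint_left.mp (h𝒞'dis c hc d hd hcd)) hbc this
    by_cases hcase : ∃ c, ∃ hc : c ∈ 𝒞', tf c hc ≤ a
    · -- case (a): remove the chain K = {a} ∪ {x ∈ c₀ | x ≤ t(c₀)}
      obtain ⟨c₀, hc₀, hta⟩ := hcase
      set t₀ := tf c₀ hc₀ with ht₀
      set K : Finset α := insert a (c₀.filter (fun x => x ≤ t₀)) with hK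
      have haK : a ∈ K := Finset.mem_insert_self a _
      have hKs : K ⊆ s := by
        intro x hx
        rcases Finset.mem_insert.mp hx with rfl | hx
        · exact ha
        · exact hs'sub ((h𝒞'c c₀ hc₀).1 (Finset.mem_filter.mp hx).1)
      have hKchain : IsChain (· ≤ ·) (K : Set α) := by
        intro x hx y hy hxy
        simp only [hK, Finset.coe_insert, Set.mem_insert_iff, Finset.coe_filter,
          Set.mem_setOf_eq] at hx hy
        rcases hx with rfl | ⟨hxc, hxt⟩
        · rcases hy with rfl | ⟨hyc, hyt⟩
          · exact absurd rfl hxy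
          · exact Or.inr (hyt.trans hta)
        · rcases hy with rfl | ⟨hyc, hyt⟩
          · exact Or.inl (hxt.trans hta)
          · exact (h𝒞'c c₀ hc₀).2 hxc hyc hxy
      have hsK : (s \ K).card ≤ n := by
        have h1 : (s \ K).card < s.card := by
          apply Finset.card_lt_card
          constructor
          · exact Finset.sdiff_subset
          · intro hsub
            have := hsub ha
            exact (Finset.mem_sdiff.mp this).2 haK
        omega
      have hbound : ∀ B : Finset α, B ⊆ s \ K → IsAntichain (· ≤ ·) (B : Set α) →
          B.card ≤ k - 1 := by
        intro B hBs hBa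
        have hBs' : B ⊆ s' := by
          intro x hx
          have hx' := Finset.mem_sdiff.mp (hBs hx)
          refine Finset.mem_erase.mpr ⟨?_, hx'.1⟩
          rintro rfl
          exact hx'.2 haK
        have hBk : B.card ≤ k := hkub B hBs' hBa
        rcases lt_or_eq_of_le hBk with h | h
        · omega
        · exfalso
          obtain ⟨b, hbB, hbc⟩ := meet B hBs' hBa h c₀ hc₀
          have hbt : b ≤ t₀ := htf3 c₀ hc₀ b hbc ⟨B, hBs', hBa, h, hbB⟩
          have hbK : b ∈ K := Finset.mem_insert.mpr
            (Or.inr (Finset.mem_filter.mpr ⟨hbc, hbt⟩))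
          exact (Finset.mem_sdiff.mp (hBs hbB)).2 hbK
      obtain ⟨𝒞'', h𝒞''c, h𝒞''cov, h𝒞''dis, h𝒞''card⟩ := ih (s \ K) hsK (k - 1) hbound
      have hkw : k ≤ w := by have := hw A₀ (hA₀s.trans hs'sub) hA₀a; omega
      have hk1 : 1 ≤ k := by
        have : (0 : ℕ) < k := by
          have h1 : ({t₀} : Finset α) ⊆ s' := by
            exact Finset.singleton_subset_iff.mpr (htfs' c₀ hc₀)
          have := hkub {t₀} h1 (by simp [IsAntichain])
          -- this : 1 ≤ k? card {t₀} = 1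
          simp at this; omega
        omega
      refine ⟨insert K 𝒞'', ?_, ?_, ?_, ?_⟩
      · intro c hc
        rcases Finset.mem_insert.mp hc with rfl | hc
        · exact ⟨hKs, hKchain⟩
        · exact ⟨(h𝒞''c c hc).1.trans Finset.sdiff_subset, (h𝒞''c c hc).2⟩
      · intro x hx
        by_cases hxK : x ∈ K
        · exact ⟨K, Finset.mem_insert_self _ _, hxK⟩
        · obtain ⟨c, hc, hxc⟩ := h𝒞''cov x (Finset.mem_sdiff.mpr ⟨hx, hxK⟩)
          exact ⟨c, Finset.mem_insert_of_mem hc, hxc⟩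
      · intro c hc d hd hcd
        have hKdis : ∀ e ∈ 𝒞'', Disjoint K e := by
          intro e he
          rw [Finset.disjoint_right]
          intro x hxe hxK
          exact (Finset.mem_sdiff.mp ((h𝒞''c e he).1 hxe)).2 hxK
        rcases Finset.mem_insert.mp hc with rfl | hc
        · rcases Finset.mem_insert.mp hd with rfl | hd
          · exact absurd rfl hcd
          · exact hKdis d hd
        · rcases Finset.mem_insert.mp hd with rfl | hd
          · exact (hKdis c hc).symm
          · exact h𝒞''dis c hc d hd hcd
      · calc (insert K 𝒞'').card ≤ 𝒞''.card + 1 := Finset.card_insert_le _ _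
          _ ≤ (k - 1) + 1 := by omega
          _ ≤ k := by omega
          _ ≤ w := hkw
    · -- case (b): a is incomparable to all the t's; add {a} as a new chain
      push_neg at hcase
      set A' : Finset α := insert a (𝒞'.attach.image (fun c => tf c.1 c.2)) with hA'
      have htne : ∀ c hc, tf c hc ≠ a := by
        intro c hc h
        exact (Finset.mem_erase.mp (htfs' c hc)).1 h
      have hA'anti : IsAntichain (· ≤ ·) (A' : Set α) := by
        intro x hx y hy hxy
        simp only [hA', Finset.coe_insert, Set.mem_insert_iff, Finset.coe_image,
          Finset.mem_coe, Finset.mem_attach, Set.mem_image, Set.mem_setOf_eq] at hx hy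
        have himg : ∀ z, (∃ c : {x // x ∈ 𝒞'}, c ∈ 𝒞'.attach ∧ tf c.1 c.2 = z) →
            ∃ c, ∃ hc : c ∈ 𝒞', tf c hc = z := by
          rintro z ⟨⟨c, hc⟩, _, h⟩; exact ⟨c, hc, h⟩
        rcases hx with rfl | hx
        · rcases hy with rfl | hy
          · exact absurd rfl hxy
          · obtain ⟨c, hc, rfl⟩ := himg _ (by simpa using hy)
            intro hle
            exact hxy (le_antisymm hle (hamax (hs'sub (htfs' c hc)) hle))
        · obtain ⟨c, hc, rfl⟩ := himg _ (by simpa using hx)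
          rcases hy with rfl | hy
          · exact hcase c hc
          · obtain ⟨d, hd, rfl⟩ := himg _ (by simpa using hy)
            have hcd : c ≠ d := by
              rintro rfl
              exact hxy rfl
            exact hanti c hc d hd hcd
      have hA's : A' ⊆ s := by
        intro x hx
        rcases Finset.mem_insert.mp hx with rfl | hx
        · exact ha
        · obtain ⟨⟨c, hc⟩, _, rfl⟩ := Finset.mem_image.mp hx
          exact hs'sub (htfs' c hc)
      have hinj : Set.InjOn (fun c : {x // x ∈ 𝒞'} => tf c.1 c.2) 𝒞'.attach := by
        intro ⟨c, hc⟩ _ ⟨d, hd⟩ _ h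
        by_contra hne'
        have hcd : c ≠ d := fun h' => hne' (by simp [h'])
        exact hanti c hc d hd hcd (le_of_eq h)
      have hA'card : A'.card = 𝒞'.card + 1 := by
        rw [hA', Finset.card_insert_of_notMem, Finset.card_image_of_injOn hinj,
          Finset.card_attach]
        intro h
        obtain ⟨⟨c, hc⟩, _, h⟩ := Finset.mem_image.mp h
        exact htne c hc h
      have hcw : 𝒞'.card + 1 ≤ w := hA'card ▸ hw A' hA's hA'anti
      refine ⟨insert {a} 𝒞', ?_, ?_, ?_, ?_⟩
      · intro c hc
        rcases Finset.mem_insert.mp hc with rfl | hc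
        · exact ⟨Finset.singleton_subset_iff.mpr ha, by simp [IsChain]⟩
        · exact ⟨(h𝒞'c c hc).1.trans hs'sub, (h𝒞'c c hc).2⟩
      · intro x hx
        by_cases hxa : x = a
        · exact ⟨{a}, Finset.mem_insert_self _ _, by simp [hxa]⟩
        · obtain ⟨c, hc, hxc⟩ := h𝒞'cov x (Finset.mem_erase.mpr ⟨hxa, hx⟩)
          exact ⟨c, Finset.mem_insert_of_mem hc, hxc⟩
      · intro c hc d hd hcd
        have hadis : ∀ e ∈ 𝒞', Disjoint ({a} : Finset α) e := by
          intro e he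
          rw [Finset.disjoint_left]
          intro x hx hxe
          rw [Finset.mem_singleton] at hx
          subst hx
          exact (Finset.mem_erase.mp ((h𝒞'c e he).1 hxe)).1 rfl
        rcases Finset.mem_insert.mp hc with rfl | hc
        · rcases Finset.mem_insert.mp hd with rfl | hd
          · exact absurd rfl hcd
          · exact hadis d hd
        · rcases Finset.mem_insert.mp hd with rfl | hd
          · exact (hadis c hc).symm
          · exact h𝒞'dis c hc d hd hcd
      · calc (insert {a} 𝒞').card ≤ 𝒞'.card + 1 := Finset.card_insert_le _ _
          _ ≤ w := hcw


noncomputable def linOfIs (s : α → α → Prop) (h : IsLinearOrder α s) : LinearOrder α :=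
  letI := h
  { le := s
    lt := fun a b => s a b ∧ ¬ s b a
    lt_iff_le_not_ge := fun _ _ => Iff.rfl
    le_refl := fun a => h.toIsPartialOrder.toIsPreorder.toRefl.refl a
    le_trans := fun a b c => h.toIsPartialOrder.toIsPreorder.toIsTrans.trans a b c
    le_antisymm := fun a b => h.toIsPartialOrder.toAntisymm.antisymm a b
    le_total := fun a b => h.toTotal.total a b
    toDecidableLE := fun a b => Classical.dec _ }

lemma chain_ext (C : Set α) (hC : IsChain (· ≤ ·) C) :
    ∃ L : LinearOrder α, IsLinExt α L ∧ ∀ c ∈ C, ∀ x : α, ¬ x ≤ c → ¬ c ≤ x → L.lt x c := by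
  classical
  set r : α → α → Prop := fun x y => x ≤ y ∨ ∃ c ∈ C, c ≤ y ∧ ¬ c ≤ x with hr
  have hrefl : ∀ a, r a a := fun a => Or.inl le_rfl
  have htrans : ∀ a b c, r a b → r b c → r a c := by
    rintro a b c (hab | ⟨u, hu, huy, hux⟩) (hbc | ⟨v, hv, hvy, hvx⟩)
    · exact Or.inl (hab.trans hbc)
    · exact Or.inr ⟨v, hv, hvy, fun h => hvx (h.trans hab)⟩
    · exact Or.inr ⟨u, hu, huy.trans hbc, hux⟩
    · rcases hC.total hu hv with huv | hvu
      · exact Or.inr ⟨u, hu, huv.trans hvy, hux⟩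
      · exact absurd (hvu.trans huy) hvx
  have hanti : ∀ a b, r a b → r b a → a = b := by
    rintro a b (hab | ⟨u, hu, huy, hux⟩) (hba | ⟨v, hv, hvy, hvx⟩)
    · exact le_antisymm hab hba
    · exact absurd (hvy.trans hab) hvx
    · exact absurd (huy.trans hba) hux
    · rcases hC.total hu hv with huv | hvu
      · exact absurd (huv.trans hvy) hux
      · exact absurd (hvu.trans huy) hvx
  haveI hpo : IsPartialOrder α r :=
    { refl := hrefl, trans := htrans, antisymm := hanti }
  obtain ⟨s, hs, hrs⟩ := extend_partialOrder r
  refine ⟨linOfIs s hs, fun x y hxy => hrs _ _ (Or.inl hxy), ?_⟩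
  intro c hc x hxc hcx
  have h1 : s x c := hrs _ _ (Or.inr ⟨c, hc, le_rfl, hcx⟩)
  have h2 : ¬ s c x := by
    intro h
    have := hs.toIsPartialOrder.toAntisymm.antisymm _ _ h h1
    exact hcx (this ▸ le_rfl)
  exact ⟨h1, h2⟩

omit [PartialOrder α] in
lemma lt_not_le (L : LinearOrder α) {a b : α} (h : L.lt a b) : ¬ L.le b a := by
  have := (@lt_iff_le_not_ge α L.toPreorder a b).mp h
  exact this.2


end Aux



/-- the order dimension of a finite poset is at most its width, the
maximum size of an antichain. -/
theorem stmt6 {α : Type*} [Fintype α] [PartialOrder α] :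
    pdim α ≤ sSup {n : ℕ | ∃ A : Finset α, IsAntichain (· ≤ ·) (A : Set α) ∧ A.card = n} := by
  classical
  set w := sSup {n : ℕ | ∃ A : Finset α, IsAntichain (· ≤ ·) (A : Set α) ∧ A.card = n} with hwdef
  have hbdd : BddAbove {n : ℕ | ∃ A : Finset α, IsAntichain (· ≤ ·) (A : Set α) ∧ A.card = n} := by
    refine ⟨Fintype.card α, fun m hm => ?_⟩
    obtain ⟨A, _, hAc⟩ := hm
    exact hAc ▸ A.card_le_univ
  have hw : ∀ A : Finset α, IsAntichain (· ≤ ·) (A : Set α) → A.card ≤ w :=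
    fun A hA => le_csSup hbdd ⟨A, hA, rfl⟩
  rcases isEmpty_or_nonempty α with hα | hα
  · have h0 : HasRealizer α 0 := by
      refine ⟨fun i => i.elim0, fun i => i.elim0, fun x y _ => ?_⟩
      exact (hα.false x).elim
    calc pdim α ≤ 0 := Nat.sInf_le h0
      _ ≤ w := Nat.zero_le w
  · -- α nonempty: w ≥ 1
    obtain ⟨x₀⟩ := hα
    have hw1 : 1 ≤ w := by
      have := hw {x₀} (by simp [IsAntichain])
      simpa using this
    obtain ⟨𝒞, h𝒞c, h𝒞cov, _, h𝒞card⟩ :=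
      dilworth (Fintype.card α) (Finset.univ : Finset α) (by simp) w
        (fun A _ hA => hw A hA)
    -- a linear extension per chain
    have hLs : ∀ c : {c // c ∈ 𝒞}, ∃ L : LinearOrder α, IsLinExt α L ∧
        ∀ t ∈ (c.1 : Set α), ∀ x : α, ¬ x ≤ t → ¬ t ≤ x → L.lt x t := by
      intro c
      obtain ⟨L, h1, h2⟩ := chain_ext (c.1 : Set α) (h𝒞c c.1 c.2).2
      exact ⟨L, h1, h2⟩
    choose chL hchL1 hchL2 using hLs
    -- default linear extension
    obtain ⟨L₀, hL₀, -⟩ := chain_ext (∅ : Set α) (by simp [IsChain])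
    -- embedding of chains into Fin w
    have hcardle : Fintype.card {c // c ∈ 𝒞} ≤ Fintype.card (Fin w) := by
      rw [Fintype.card_coe, Fintype.card_fin]
      exact h𝒞card
    obtain ⟨emb⟩ := Function.Embedding.nonempty_of_card_le hcardle
    set Ls : Fin w → LinearOrder α := fun i =>
      if h : ∃ c, emb c = i then chL (Classical.choose h) else L₀ with hLsdef
    have hR : HasRealizer α w := by
      refine ⟨Ls, ?_, ?_⟩
      · intro i
        rw [hLsdef]
        dsimp only
        split
        · exact hchL1 _
        · exact hL₀
      · intro x y hxy
        by_contra hnxy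
        by_cases hyx : y ≤ x
        · -- y < x strictly
          have hlt : y < x := lt_of_le_of_ne hyx (fun h => hnxy (h ▸ le_rfl))
          have i : Fin w := ⟨0, hw1⟩
          have hle := hxy ⟨0, hw1⟩
          have hL := (show IsLinExt α (Ls ⟨0, hw1⟩) from by
            rw [hLsdef]; dsimp only; split; exacts [hchL1 _, hL₀]) y x hyx
          have hxeqy : x = y := (Ls ⟨0, hw1⟩).le_antisymm x y hle hL
          exact hnxy (hxeqy ▸ le_rfl)
        · -- incomparable
          obtain ⟨c, hc, hxc⟩ := h𝒞cov x (Finset.mem_univ x)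
          set cs : {c // c ∈ 𝒞} := ⟨c, hc⟩ with hcs
          set i := emb cs with hi
          have hex : ∃ c', emb c' = i := ⟨cs, rfl⟩
          have hcc : Classical.choose hex = cs := emb.injective (Classical.choose_spec hex)
          have hLsi : Ls i = chL cs := by
            rw [hLsdef]
            simp only [dif_pos hex, hcc]
          have hlt := hchL2 cs x (by exact_mod_cast hxc) y hyx hnxy
          have := lt_not_le (chL cs) hlt
          exact this (hLsi ▸ hxy i)
    calc pdim α ≤ w := Nat.sInf_le hR
      _ ≤ w := le_rfl
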